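/- Let (I, f_{1,∞}) be an m-periodic non-autonomous system on I = [0,1]. If (I, f_{1,∞}) is sensitive, then it is ergodically sensitive: there exists δ > 0 such that for every non-empty open U ⊆ I, the set N(U, δ) = {n : ∃ x, y ∈ U, |f_1^n(x) − f_1^n(y)| > δ} has positive upper density. -/

import Mathlib

open Set Filter MeasureTheory TopologicalSpace

/-- `iterN f n = f_{n-1} ∘ ⋯ ∘ f_0`, the `n`-th iterate of the non-autonomous system. -/
def iterN {X : Type*} (f : ℕ → X → X) : ℕ → X → X
  | 0 => id
  | n + 1 => f n ∘ iterN f n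

/-- Topological transitivity of a non-autonomous system. -/
def NATransitive {X : Type*} [TopologicalSpace X] (f : ℕ → X → X) : Prop :=
  ∀ U V : Set X, IsOpen U → IsOpen V → U.Nonempty → V.Nonempty →
    ∃ n : ℕ, 0 < n ∧ (iterN f n '' U ∩ V).Nonempty

/-- Weak mixing (order 2). -/
def NAWeaklyMixing {X : Type*} [TopologicalSpace X] (f : ℕ → X → X) : Prop :=
  ∀ U₁ U₂ V₁ V₂ : Set X, IsOpen U₁ → IsOpen U₂ → IsOpen V₁ → IsOpen V₂ →
    U₁.Nonempty → U₂.Nonempty → V₁.Nonempty → V₂.Nonempty →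
    ∃ n : ℕ, 0 < n ∧ (iterN f n '' U₁ ∩ V₁).Nonempty ∧ (iterN f n '' U₂ ∩ V₂).Nonempty

/-- Weak mixing of order `m`. -/
def NAWeaklyMixingOrder {X : Type*} [TopologicalSpace X] (f : ℕ → X → X) (m : ℕ) : Prop :=
  ∀ U V : Fin m → Set X, (∀ i, IsOpen (U i)) → (∀ i, IsOpen (V i)) →
    (∀ i, (U i).Nonempty) → (∀ i, (V i).Nonempty) →
    ∃ n : ℕ, 0 < n ∧ ∀ i, (iterN f n '' U i ∩ V i).Nonempty

/-- Banks's condition. -/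
def NABanks {X : Type*} [TopologicalSpace X] (f : ℕ → X → X) : Prop :=
  ∀ U V W : Set X, IsOpen U → IsOpen V → IsOpen W →
    U.Nonempty → V.Nonempty → W.Nonempty →
    ∃ n : ℕ, 0 < n ∧ (iterN f n '' U ∩ V).Nonempty ∧ (iterN f n '' U ∩ W).Nonempty

/-- Topological mixing. -/
def NAMixing {X : Type*} [TopologicalSpace X] (f : ℕ → X → X) : Prop :=
  ∀ U V : Set X, IsOpen U → IsOpen V → U.Nonempty → V.Nonempty →
    ∃ N : ℕ, ∀ n ≥ N, (iterN f n '' U ∩ V).Nonempty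

/-- `blockC f s k = f_{s+k-1} ∘ ⋯ ∘ f_s`. -/
def blockC {X : Type*} (f : ℕ → X → X) (s k : ℕ) : X → X :=
  iterN (fun i => f (s + i)) k

/-- The `k`-th iterate system `f_{1,∞}^{[k]}`. -/
def kthSys {X : Type*} (f : ℕ → X → X) (k : ℕ) : ℕ → X → X :=
  fun n => blockC f (n * k) k

/-- The induced non-autonomous system on Borel probability measures (pushforwards). -/
noncomputable def inducedM {X : Type*} [MeasurableSpace X] [TopologicalSpace X]
    [BorelSpace X] (f : ℕ → X → X) (hf : ∀ n, Continuous (f n)) :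
    ℕ → ProbabilityMeasure X → ProbabilityMeasure X :=
  fun n μ => μ.map ((hf n).measurable.aemeasurable)

/-- The induced non-autonomous system on the hyperspace of non-empty compact subsets. -/
def inducedK {X : Type*} [TopologicalSpace X] (f : ℕ → X → X) (hf : ∀ n, Continuous (f n)) :
    ℕ → NonemptyCompacts X → NonemptyCompacts X :=
  fun n K => ⟨⟨f n '' (K : Set X), K.isCompact.image (hf n)⟩, K.nonempty.image _⟩

/-- The set `N(U, δ)` of sensitivity times. -/
def NSet {X : Type*} [PseudoMetricSpace X] (f : ℕ → X → X) (U : Set X) (δ : ℝ) : Set ℕ :=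
  {n | 0 < n ∧ ∃ x ∈ U, ∃ y ∈ U, δ < dist (iterN f n x) (iterN f n y)}

/-- Sensitive dependence on initial conditions. -/
def NASensitive {X : Type*} [PseudoMetricSpace X] (f : ℕ → X → X) : Prop :=
  ∃ δ : ℝ, 0 < δ ∧ ∀ x : X, ∀ U : Set X, IsOpen U → x ∈ U →
    ∃ y ∈ U, ∃ n : ℕ, 0 < n ∧ δ < dist (iterN f n x) (iterN f n y)

/-- A thick subset of ℕ. -/
def ThickSet (S : Set ℕ) : Prop := ∀ p : ℕ, ∃ n : ℕ, ∀ j ≤ p, n + j ∈ S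

/-- A syndetic subset of ℕ. -/
def SyndeticSet (S : Set ℕ) : Prop := ∃ a : ℕ, ∀ i : ℕ, ∃ j, i ≤ j ∧ j ≤ i + a ∧ j ∈ S

/-- Upper density of a subset of ℕ. -/
noncomputable def upperDens (S : Set ℕ) : ℝ :=
  Filter.limsup (fun n : ℕ => (Nat.card ↥(S ∩ Set.Iio n) : ℝ) / n) Filter.atTop

/-- Periodic point of a non-autonomous system. -/
def NAPeriodicPt {X : Type*} (f : ℕ → X → X) (x : X) : Prop :=
  ∃ n : ℕ, 0 < n ∧ ∀ k : ℕ, 0 < k → iterN f (n * k) x = x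

section aux

lemma iterN_add {X : Type*} (f : ℕ → X → X) (d c : ℕ) :
    iterN f (d + c) = iterN (fun i => f (d + i)) c ∘ iterN f d := by
  induction c with
  | zero => rfl
  | succ c ih =>
    show f (d + c) ∘ iterN f (d + c) = _
    rw [ih]; rfl

lemma iterN_continuous {X : Type*} [TopologicalSpace X] (f : ℕ → X → X)
    (hf : ∀ n, Continuous (f n)) (n : ℕ) : Continuous (iterN f n) := by
  induction n with
  | zero => exact continuous_id
  | succ n ih => exact (hf n).comp ih

lemma per_shift {X : Type*} (f : ℕ → X → X) (m : ℕ) (hper : ∀ n, f (n + m) = f n)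
    (q i : ℕ) : f (i + m * q) = f i := by
  induction q with
  | zero => simp
  | succ q ih => rw [Nat.mul_succ, ← Nat.add_assoc, hper, ih]

lemma iterN_mul {X : Type*} (f : ℕ → X → X) (m : ℕ) (hper : ∀ n, f (n + m) = f n)
    (q : ℕ) : iterN f (m * q) = (iterN f m)^[q] := by
  induction q with
  | zero => rfl
  | succ q ih =>
    rw [Nat.mul_succ, iterN_add, Function.iterate_succ', ih]
    have : (fun i => f (m * q + i)) = f := by
      funext i
      rw [Nat.add_comm, per_shift f m hper]
    rw [this]

lemma iterN_decomp {X : Type*} (f : ℕ → X → X) (m : ℕ) (hm : 0 < m)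
    (hper : ∀ n, f (n + m) = f n) (n : ℕ) :
    iterN f n = iterN f (n % m) ∘ (iterN f m)^[n / m] := by
  conv_lhs => rw [← Nat.div_add_mod n m]
  rw [iterN_add, iterN_mul f m hper]
  have : (fun i => f (m * (n / m) + i)) = f := by
    funext i; rw [Nat.add_comm, per_shift f m hper]
  rw [this]

lemma syndetic_seq (S : Set ℕ) (n₀ K : ℕ) (h₀ : n₀ ∈ S)
    (hstep : ∀ n ∈ S, ∃ k, 0 < k ∧ k ≤ K ∧ n + k ∈ S) :
    ∃ σ : ℕ → ℕ, StrictMono σ ∧ (∀ t, σ t ∈ S) ∧ ∀ t, σ t ≤ n₀ + t * K := by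
  have hstep' : ∀ n, ∃ k, 0 < k ∧ (n ∈ S → (k ≤ K ∧ n + k ∈ S)) := by
    intro n
    by_cases hn : n ∈ S
    · obtain ⟨k, hk1, hk2, hk3⟩ := hstep n hn
      exact ⟨k, hk1, fun _ => ⟨hk2, hk3⟩⟩
    · exact ⟨1, one_pos, fun hc => absurd hc hn⟩
  choose k hk0 hkS using hstep'
  refine ⟨fun t => Nat.rec n₀ (fun _ acc => acc + k acc) t, ?_, ?_, ?_⟩
  · have mono : ∀ t, (Nat.rec n₀ (fun _ acc => acc + k acc) t : ℕ) <
        Nat.rec n₀ (fun _ acc => acc + k acc) (t + 1) := by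
      intro t
      exact Nat.lt_add_of_pos_right (hk0 _)
    exact strictMono_nat_of_lt_succ mono
  · intro t
    induction t with
    | zero => exact h₀
    | succ t ih => exact ((hkS _ ih).2)
  · intro t
    induction t with
    | zero => simp
    | succ t ih =>
      have hkK : k (Nat.rec n₀ (fun _ acc => acc + k acc) t) ≤ K := by
        have ihS : (Nat.rec n₀ (fun _ acc => acc + k acc) t : ℕ) ∈ S := by
          clear ih
          induction t with
          | zero => exact h₀
          | succ t ih2 => exact ((hkS _ ih2).2)
        exact (hkS _ ihS).1
      calc (Nat.rec n₀ (fun _ acc => acc + k acc) t : ℕ) + k _ ≤ (n₀ + t * K) + K :=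
            Nat.add_le_add ih hkK
        _ = n₀ + (t + 1) * K := by ring
lemma card_inter_Iio_le (S : Set ℕ) (n : ℕ) : Nat.card ↥(S ∩ Set.Iio n) ≤ n := by
  haveI : Finite ↥(S ∩ Set.Iio n) :=
    ((Set.finite_Iio n).subset inter_subset_right).to_subtype
  have : Nat.card ↥(S ∩ Set.Iio n) ≤ Nat.card (Fin n) := by
    apply Nat.card_le_card_of_injective (fun x => (⟨x.1, x.2.2⟩ : Fin n))
    intro a b hab
    exact Subtype.ext (congrArg Fin.val hab)
  simpa [Nat.card_eq_fintype_card] using this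

lemma card_lower (S : Set ℕ) (σ : ℕ → ℕ) (m : ℕ) (hm : 0 < m)
    (hmono : StrictMono σ) (hmem : ∀ t, m * σ t ∈ S) (n T : ℕ)
    (hT : ∀ t < T, m * σ t < n) : T ≤ Nat.card ↥(S ∩ Set.Iio n) := by
  haveI : Finite ↥(S ∩ Set.Iio n) :=
    ((Set.finite_Iio n).subset inter_subset_right).to_subtype
  have := Nat.card_le_card_of_injective
    (fun t : Fin T => (⟨m * σ t, hmem t, hT t t.2⟩ : ↥(S ∩ Set.Iio n))) ?_
  · simpa only [Nat.card_eq_fintype_card, Fintype.card_fin] using this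
  · intro a b hab
    have : m * σ a = m * σ b := congrArg Subtype.val hab
    have := Nat.eq_of_mul_eq_mul_left hm this
    exact Fin.ext (hmono.injective this)

lemma pos_upperDens (S : Set ℕ) (σ : ℕ → ℕ) (m K n₀ : ℕ) (hm : 0 < m) (hK : 0 < K)
    (hmono : StrictMono σ) (hmem : ∀ t, m * σ t ∈ S) (hbd : ∀ t, σ t ≤ n₀ + t * K) :
    0 < upperDens S := by
  set c : ℝ := 1 / (2 * m * K) with hc
  have hmK : (0:ℝ) < m * K := by positivity
  have hcpos : 0 < c := by positivity
  have key : ∀ n : ℕ, 2 * m * K * (n₀ + 1) ≤ n →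
      c ≤ (Nat.card ↥(S ∩ Set.Iio n) : ℝ) / n := by
    intro n hn
    have hn0 : 0 < n := lt_of_lt_of_le (by positivity) hn
    set T : ℕ := n / (m * K) - n₀ with hT
    have hTcard : T ≤ Nat.card ↥(S ∩ Set.Iio n) := by
      apply card_lower S σ m hm hmono hmem
      intro t ht
      have h1 : t + n₀ < n / (m * K) := by
        omega
      have h2 : (t + n₀ + 1) * (m * K) ≤ n := by
        rw [← Nat.le_div_iff_mul_le (by positivity)]
        omega
      have h3 : m * σ t ≤ m * (n₀ + t * K) := Nat.mul_le_mul_left m (hbd t)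
      have h4 : m * (n₀ + t * K) < (t + n₀ + 1) * (m * K) := by
        have : n₀ + t * K < (t + n₀ + 1) * K := by nlinarith [hK]
        calc m * (n₀ + t * K) < m * ((t + n₀ + 1) * K) := (Nat.mul_lt_mul_left hm).mpr this
          _ = (t + n₀ + 1) * (m * K) := by ring
      omega
    -- real estimate: (T:ℝ) ≥ n/(m*K) - 1 - n₀ ≥ n/(2*m*K) = c * n
    have hdivreal : ((n / (m * K) : ℕ) : ℝ) > (n : ℝ) / (m * K) - 1 := by
      have hmod := Nat.div_add_mod n (m * K)
      have hmodlt : n % (m * K) < m * K := Nat.mod_lt _ (by positivity)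
      have : ((m * K) : ℝ) * ((n / (m * K) : ℕ) : ℝ) + ((n % (m * K) : ℕ) : ℝ) = n := by
        exact_mod_cast hmod
      have h2 : ((n % (m * K) : ℕ) : ℝ) < (m : ℝ) * K := by exact_mod_cast hmodlt
      rw [gt_iff_lt, sub_lt_iff_lt_add, div_lt_iff₀ hmK]
      push_cast at this ⊢
      nlinarith
    have hTreal : (T : ℝ) ≥ ((n / (m * K) : ℕ) : ℝ) - n₀ := by
      rw [hT]
      by_cases hle : n₀ ≤ n / (m * K)
      · rw [Nat.cast_sub hle]
      · have h0 : n / (m * K) - n₀ = 0 := by omega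
        rw [h0]
        have : ((n / (m * K) : ℕ) : ℝ) ≤ (n₀ : ℝ) := by
          exact_mod_cast Nat.le_of_lt (by omega)
        push_cast
        linarith
    have hnR : (2*(m:ℝ)*(K:ℝ)*((n₀:ℝ)+1)) ≤ (n:ℝ) := by exact_mod_cast hn
    have hhalf : (n:ℝ)/((m:ℝ)*(K:ℝ)) - (n:ℝ)/(2*((m:ℝ)*(K:ℝ))) = (n:ℝ)/(2*((m:ℝ)*(K:ℝ))) := by
      field_simp
      ring
    have hge : (n:ℝ)/(2*((m:ℝ)*(K:ℝ))) ≥ (n₀:ℝ)+1 := by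
      rw [ge_iff_le, le_div_iff₀ (by positivity)]
      nlinarith
    have hcard : (T : ℝ) ≤ (Nat.card ↥(S ∩ Set.Iio n) : ℝ) := by exact_mod_cast hTcard
    rw [le_div_iff₀ (by exact_mod_cast hn0)]
    have hcn : c * (n:ℝ) = (n:ℝ)/(2*((m:ℝ)*(K:ℝ))) := by
      rw [hc]; ring
    linarith
  have hub : Filter.IsBoundedUnder (· ≤ ·) Filter.atTop
      (fun n : ℕ => (Nat.card ↥(S ∩ Set.Iio n) : ℝ) / n) := by
    refine ⟨1, Filter.eventually_map.2 (Filter.Eventually.of_forall fun n => ?_)⟩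
    rcases Nat.eq_zero_or_pos n with h0 | h0
    · simp [h0]
    · rw [div_le_one (by exact_mod_cast h0)]
      exact_mod_cast card_inter_Iio_le S n
  have := le_limsup_of_frequently_le
    ((Filter.eventually_atTop.2 ⟨2 * m * K * (n₀ + 1), key⟩).frequently) hub
  exact lt_of_lt_of_le hcpos this
lemma unif_eps (f : ℕ → unitInterval → unitInterval) (hf : ∀ n, Continuous (f n))
    (δ : ℝ) (hδ : 0 < δ) (m : ℕ) :
    ∃ η > 0, ∀ r < m, ∀ u v : unitInterval, dist u v < η →
      dist (iterN f r u) (iterN f r v) < δ := by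
  induction m with
  | zero => exact ⟨1, one_pos, fun r hr => absurd hr (Nat.not_lt_zero r)⟩
  | succ m ih =>
    obtain ⟨η₁, hη₁, h1⟩ := ih
    obtain ⟨η₂, hη₂, h2⟩ := Metric.uniformContinuous_iff.mp
      (CompactSpace.uniformContinuous_of_continuous (iterN_continuous f hf m)) δ hδ
    refine ⟨min η₁ η₂, lt_min hη₁ hη₂, fun r hr u v huv => ?_⟩
    rcases Nat.lt_succ_iff_lt_or_eq.mp hr with hr' | rfl
    · exact h1 r hr' u v (lt_of_lt_of_le huv (min_le_left _ _))
    · exact h2 (lt_of_lt_of_le huv (min_le_right _ _))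

lemma val_image_ball (x₀ : unitInterval) (ρ : ℝ) :
    Subtype.val '' (Metric.ball x₀ ρ) = Metric.ball (x₀ : ℝ) ρ ∩ Icc (0:ℝ) 1 := by
  ext t
  constructor
  · rintro ⟨s, hs, rfl⟩
    exact ⟨by rwa [Metric.mem_ball, ← Subtype.dist_eq], s.2⟩
  · rintro ⟨ht, ht2⟩
    exact ⟨⟨t, ht2⟩, by rwa [Metric.mem_ball, Subtype.dist_eq], rfl⟩

lemma spread_lemma (ε : ℝ) (hε : 0 < ε) (A : Set unitInterval)
    (hpre : IsPreconnected (Subtype.val '' A))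
    (hab : ∃ a ∈ A, ∃ b ∈ A, ε < dist a b) :
    ∃ i < Nat.floor (4/ε) + 1,
      (Subtype.val ⁻¹' Ioo ((i:ℝ)*(ε/4)) ((i:ℝ)*(ε/4)+ε/4) : Set unitInterval).Nonempty ∧
      (Subtype.val ⁻¹' Ioo ((i:ℝ)*(ε/4)) ((i:ℝ)*(ε/4)+ε/4) : Set unitInterval) ⊆ A := by
  obtain ⟨a, ha, b, hb, hd⟩ := hab
  set p : ℝ := min (a:ℝ) (b:ℝ) with hp
  set q : ℝ := max (a:ℝ) (b:ℝ) with hq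
  have hpq : ε < q - p := by
    rw [hp, hq, max_sub_min_eq_abs]
    rw [Subtype.dist_eq, Real.dist_eq] at hd
    rcases abs_sub_comm (a:ℝ) (b:ℝ) ▸ hd with h
    first
    | exact h
    | rwa [abs_sub_comm]
  have hpA : p ∈ Subtype.val '' A := by
    rcases min_cases (a:ℝ) (b:ℝ) with ⟨h1, _⟩ | ⟨h1, _⟩ <;> rw [hp, h1]
    · exact ⟨a, ha, rfl⟩
    · exact ⟨b, hb, rfl⟩
  have hqA : q ∈ Subtype.val '' A := by
    rcases max_cases (a:ℝ) (b:ℝ) with ⟨h1, _⟩ | ⟨h1, _⟩ <;> rw [hq, h1]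
    · exact ⟨a, ha, rfl⟩
    · exact ⟨b, hb, rfl⟩
  have hIcc : Icc p q ⊆ Subtype.val '' A := hpre.ordConnected.out hpA hqA
  have hp0 : 0 ≤ p := le_min a.2.1 b.2.1
  have hq1 : q ≤ 1 := max_le a.2.2 b.2.2
  set i : ℕ := Nat.floor (p / (ε/4)) + 1 with hi
  have hε4 : (0:ℝ) < ε/4 := by positivity
  have hcgt : p < (i:ℝ) * (ε/4) := by
    have := Nat.lt_floor_add_one (p / (ε/4))
    rw [hi]
    push_cast
    calc p = (p / (ε/4)) * (ε/4) := by field_simp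
      _ < ((Nat.floor (p / (ε/4)) : ℝ) + 1) * (ε/4) := by
          apply mul_lt_mul_of_pos_right this hε4
  have hcle : (i:ℝ) * (ε/4) ≤ p + ε/4 := by
    have hfl : (Nat.floor (p / (ε/4)) : ℝ) ≤ p / (ε/4) := Nat.floor_le (by positivity)
    rw [hi]
    push_cast
    calc ((Nat.floor (p / (ε/4)) : ℝ) + 1) * (ε/4) ≤ (p / (ε/4) + 1) * (ε/4) := by
          apply mul_le_mul_of_nonneg_right (by linarith) (le_of_lt hε4)
      _ = p + ε/4 := by field_simp
  have hIoo : Ioo ((i:ℝ)*(ε/4)) ((i:ℝ)*(ε/4)+ε/4) ⊆ Icc p q := by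
    intro t ht
    exact ⟨le_of_lt (lt_of_lt_of_le hcgt (le_of_lt ht.1)), by
      have := ht.2; nlinarith [hcle, hpq]⟩
  have hiM : i < Nat.floor (4/ε) + 1 := by
    have h1 : (i:ℝ) * (ε/4) ≤ 1 := by nlinarith [hcle, hpq, hq1]
    have h2 : (i:ℝ) ≤ 4/ε := by
      rw [le_div_iff₀ hε]
      nlinarith
    have := Nat.le_floor h2
    omega
  refine ⟨i, hiM, ?_, ?_⟩
  · have hmid : (i:ℝ)*(ε/4) + ε/8 ∈ Ioo ((i:ℝ)*(ε/4)) ((i:ℝ)*(ε/4)+ε/4) := by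
      constructor <;> nlinarith
    obtain ⟨s, hsA, hs⟩ := hIcc (hIoo hmid)
    exact ⟨s, by rw [Set.mem_preimage, hs]; exact hmid⟩
  · intro t ht
    obtain ⟨s, hsA, hs⟩ := hIcc (hIoo ht)
    rwa [show s = t from Subtype.ext hs] at hsA
end aux

/-- an `m`-periodic sensitive non-autonomous system on `[0,1]` is
ergodically sensitive. -/
theorem periodic_interval_sensitive_implies_ergodically_sensitive
    (f : ℕ → unitInterval → unitInterval) (hf : ∀ n, Continuous (f n)) (m : ℕ)
    (hm : 0 < m) (hper : ∀ n, f (n + m) = f n) (h : NASensitive f) :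
    ∃ δ : ℝ, 0 < δ ∧ ∀ U : Set unitInterval, IsOpen U → U.Nonempty →
      0 < upperDens (NSet f U δ) := by
  classical
  obtain ⟨δ, hδ, hsen⟩ := h
  obtain ⟨η, hη, hηp⟩ := unif_eps f hf δ hδ m
  set ε : ℝ := min η δ / 2 with hεdef
  have hε : 0 < ε := by positivity
  have hεη : ε < η := by
    have := min_le_left η δ; simp only [hεdef]; linarith
  have hεδ : ε < δ := by
    have := min_le_right η δ; simp only [hεdef]; linarith
  set g : unitInterval → unitInterval := iterN f m with hg
  have hgc : Continuous g := iterN_continuous f hf m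
  -- spreading property of g
  have Sg : ∀ W : Set unitInterval, IsOpen W → W.Nonempty →
      ∃ q, 0 < q ∧ ∃ x ∈ W, ∃ y ∈ W, ε < dist (g^[q] x) (g^[q] y) := by
    intro W hWo hWne
    obtain ⟨x, hx⟩ := hWne
    have hW'o : IsOpen (W ∩ Metric.ball x (ε/2)) := hWo.inter Metric.isOpen_ball
    have hxW' : x ∈ W ∩ Metric.ball x (ε/2) := ⟨hx, Metric.mem_ball_self (by positivity)⟩
    obtain ⟨y, hy, n, hn, hd⟩ := hsen x _ hW'o hxW'
    rw [iterN_decomp f m hm hper n] at hd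
    have hr : n % m < m := Nat.mod_lt _ hm
    have hsep : ε < dist (g^[n / m] x) (g^[n / m] y) := by
      by_contra hcon
      push_neg at hcon
      exact absurd (hηp _ hr _ _ (lt_of_le_of_lt hcon hεη)) (not_lt.mpr (le_of_lt hd))
    have hq : 0 < n / m := by
      rcases Nat.eq_zero_or_pos (n / m) with h0 | h0
      · exfalso
        rw [h0] at hsep
        simp only [Function.iterate_zero, id_eq] at hsep
        have : dist x y < ε / 2 := by
          rw [dist_comm]; exact hy.2
        linarith
      · exact h0
    exact ⟨n / m, hq, x, hx, y, hy.1, hsep⟩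
  -- grid sets
  set M : ℕ := Nat.floor (4/ε) + 1 with hM
  set V : ℕ → Set unitInterval :=
    fun i => Subtype.val ⁻¹' Ioo ((i:ℝ)*(ε/4)) ((i:ℝ)*(ε/4)+ε/4) with hV
  have hVopen : ∀ i, IsOpen (V i) := fun i => isOpen_Ioo.preimage continuous_subtype_val
  set Q : ℕ → ℕ → Prop :=
    fun i kk => 0 < kk ∧ ∃ u ∈ V i, ∃ v ∈ V i, ε < dist (g^[kk] u) (g^[kk] v) with hQ
  have hQex : ∀ i, (V i).Nonempty → ∃ kk, Q i kk := by
    intro i hne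
    obtain ⟨q, hq, x, hx, y, hy, hd⟩ := Sg (V i) (hVopen i) hne
    exact ⟨q, hq, x, hx, y, hy, hd⟩
  set k : ℕ → ℕ := fun i => if hh : ∃ kk, Q i kk then hh.choose else 1 with hk
  have hkQ : ∀ i, (V i).Nonempty → Q i (k i) := by
    intro i hne
    have hh := hQex i hne
    simp only [hk, dif_pos hh]
    exact hh.choose_spec
  set K : ℕ := (Finset.range M).sup k + 1 with hK
  have hKpos : 0 < K := Nat.succ_pos _
  have hkK : ∀ i < M, k i ≤ K := by
    intro i hi
    exact le_trans (Finset.le_sup (Finset.mem_range.mpr hi)) (Nat.le_succ _)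
  refine ⟨ε, hε, fun U hU hUne => ?_⟩
  obtain ⟨x₀, hx₀⟩ := hUne
  obtain ⟨ρ, hρ, hball⟩ := Metric.isOpen_iff.mp hU x₀ hx₀
  set J : Set unitInterval := Metric.ball x₀ ρ with hJ
  have hJU : J ⊆ U := hball
  have hJpre : IsPreconnected (Subtype.val '' J) := by
    rw [hJ, val_image_ball]
    exact ((convex_ball (x₀:ℝ) ρ).inter (convex_Icc 0 1)).isPreconnected
  have hJpre' : IsPreconnected J :=
    (Topology.IsInducing.subtypeVal.isPreconnected_image).mp hJpre
  set Nstar : Set ℕ :=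
    {q | 0 < q ∧ ∃ x ∈ J, ∃ y ∈ J, ε < dist (g^[q] x) (g^[q] y)} with hNstar
  obtain ⟨n₀, hn₀0, hn₀w⟩ := Sg J Metric.isOpen_ball ⟨x₀, Metric.mem_ball_self hρ⟩
  have h₀ : n₀ ∈ Nstar := ⟨hn₀0, hn₀w⟩
  have hstepN : ∀ q ∈ Nstar, ∃ kk, 0 < kk ∧ kk ≤ K ∧ q + kk ∈ Nstar := by
    rintro q ⟨hq0, x, hx, y, hy, hd⟩
    set A : Set unitInterval := g^[q] '' J with hA
    have hApre : IsPreconnected (Subtype.val '' A) := by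
      rw [hA, Set.image_image]
      exact hJpre'.image _ (Continuous.continuousOn
        (continuous_subtype_val.comp (hgc.iterate q)))
    obtain ⟨i, hiM, hVne, hVsub⟩ := spread_lemma ε hε A hApre
      ⟨g^[q] x, ⟨x, hx, rfl⟩, g^[q] y, ⟨y, hy, rfl⟩, hd⟩
    obtain ⟨hki0, u, hu, v, hv, hduv⟩ := hkQ i hVne
    obtain ⟨x', hx', hux⟩ := hVsub hu
    obtain ⟨y', hy', hvy⟩ := hVsub hv
    refine ⟨k i, hki0, hkK i hiM, Nat.add_pos_left hq0 _, x', hx', y', hy', ?_⟩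
    rw [Nat.add_comm, Function.iterate_add_apply, Function.iterate_add_apply, hux, hvy]
    exact hduv
  obtain ⟨σ, hmono, hmem, hbd⟩ := syndetic_seq Nstar n₀ K h₀ hstepN
  have hmem' : ∀ t, m * σ t ∈ NSet f U ε := by
    intro t
    obtain ⟨hq0, x, hx, y, hy, hd⟩ := hmem t
    refine ⟨Nat.mul_pos hm hq0, x, hJU hx, y, hJU hy, ?_⟩
    rw [iterN_mul f m hper]
    exact hd
  exact pos_upperDens (NSet f U ε) σ m K n₀ hm hKpos hmono hmem' hbd
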